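/- Let n ≥ 1 and let α_1,…,α_n, β_1,…,β_n ∈ [0, π/2] satisfy cos α_i + cos α_{i+1} = cos β_i and sin β_{i-1} + sin β_i = sin α_i for all i (indices mod n). Then S := (1/2)·( (α_1 - β_1) + (α_2 - β_1) + (α_2 - β_2) + … + (α_1 - β_n) ) = Σ α_i − Σ β_i satisfies S ≥ n/4. -/
import Mathlib

lemma shift_sum (n : ℕ) (f : ℤ → ℝ) (hf : ∀ i, f (i + n) = f i) :
    ∑ i ∈ Finset.range n, f (i + 1) = ∑ i ∈ Finset.range n, f i := by
  have h1 : ∑ i ∈ Finset.range (n + 1), f i = ∑ i ∈ Finset.range n, f (i + 1) + f 0 := by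
    rw [Finset.sum_range_succ']
    push_cast
    rw [add_comm]
  have h2 : ∑ i ∈ Finset.range (n + 1), f i = ∑ i ∈ Finset.range n, f i + f n := by
    rw [Finset.sum_range_succ]
  have h3 : f (n : ℤ) = f 0 := by
    have := hf 0; simpa using this
  linarith [h1, h2, h3]

theorem stmt_4 (n : ℕ) (hn : 1 ≤ n) (α β : ℤ → ℝ)
    (hαper : ∀ i, α (i + n) = α i) (hβper : ∀ i, β (i + n) = β i)
    (hα : ∀ i, α i ∈ Set.Icc 0 (Real.pi / 2)) (hβ : ∀ i, β i ∈ Set.Icc 0 (Real.pi / 2))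
    (hc : ∀ i, Real.cos (α i) + Real.cos (α (i + 1)) = Real.cos (β i))
    (hs : ∀ i, Real.sin (β (i - 1)) + Real.sin (β i) = Real.sin (α i)) :
    ∑ i ∈ Finset.range n, α i - ∑ i ∈ Finset.range n, β i ≥ n / 4 := by
  have hpi := Real.pi_pos
  -- basic bounds
  have hα0 : ∀ i : ℤ, 0 ≤ α i := fun i => (hα i).1
  have hα2 : ∀ i : ℤ, α i ≤ Real.pi / 2 := fun i => (hα i).2
  have hβ0 : ∀ i : ℤ, 0 ≤ β i := fun i => (hβ i).1
  have hβ2 : ∀ i : ℤ, β i ≤ Real.pi / 2 := fun i => (hβ i).2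
  have hcosα : ∀ i : ℤ, 0 ≤ Real.cos (α i) := fun i =>
    Real.cos_nonneg_of_mem_Icc ⟨by linarith [hα0 i], hα2 i⟩
  have hsinα : ∀ i : ℤ, 0 ≤ Real.sin (α i) := fun i =>
    Real.sin_nonneg_of_nonneg_of_le_pi (hα0 i) (by linarith [hα2 i])
  -- β i ≤ α i
  have hβα : ∀ i : ℤ, β i ≤ α i := by
    intro i
    by_contra h
    push_neg at h
    have hlt : Real.cos (β i) < Real.cos (α i) := by
      apply Real.cos_lt_cos_of_nonneg_of_le_pi (hα0 i) (by linarith [hβ2 i]) h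
    have := hc i
    linarith [hcosα (i + 1)]
  -- summed relations
  have key1 : 2 * ∑ i ∈ Finset.range n, Real.cos (α i) = ∑ i ∈ Finset.range n, Real.cos (β i) := by
    have := Finset.sum_congr rfl (fun i (_ : i ∈ Finset.range n) => hc i)
    rw [Finset.sum_add_distrib] at this
    rw [shift_sum n (fun j => Real.cos (α j)) (fun j => by simp [hαper j])] at this
    linarith
  have key2 : 2 * ∑ i ∈ Finset.range n, Real.sin (β i) = ∑ i ∈ Finset.range n, Real.sin (α i) := by
    have := Finset.sum_congr rfl (fun i (_ : i ∈ Finset.range n) => hs i)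
    rw [Finset.sum_add_distrib] at this
    have hsh : ∑ i ∈ Finset.range n, Real.sin (β ((i : ℤ) - 1)) =
        ∑ i ∈ Finset.range n, Real.sin (β i) := by
      have := shift_sum n (fun j => Real.sin (β (j - 1))) (fun j => by
        have : (j + (n : ℤ)) - 1 = (j - 1) + n := by ring
        simp only [this, hβper])
      simpa using this.symm
    rw [hsh] at this
    linarith
  -- pointwise Lipschitz bounds
  have h1 : ∀ i : ℤ, Real.sin (α i) - Real.sin (β i) ≤ α i - β i := by
    intro i
    have hab := hβα i
    have hd0 : 0 ≤ (α i - β i) / 2 := by linarith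
    have hdπ : (α i - β i) / 2 ≤ Real.pi := by linarith [hα2 i, hβ0 i]
    have e := Real.sin_sub_sin (α i) (β i)
    nlinarith [Real.sin_le hd0, Real.sin_nonneg_of_nonneg_of_le_pi hd0 hdπ,
      Real.cos_le_one ((α i + β i) / 2)]
  have h2 : ∀ i : ℤ, Real.cos (β i) - Real.cos (α i) ≤ α i - β i := by
    intro i
    have hab := hβα i
    have hd0 : 0 ≤ (α i - β i) / 2 := by linarith
    have hs0 : 0 ≤ (α i + β i) / 2 := by linarith [hα0 i, hβ0 i]
    have hsπ : (α i + β i) / 2 ≤ Real.pi := by linarith [hα2 i, hβ2 i]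
    have e := Real.cos_sub_cos (α i) (β i)
    nlinarith [Real.sin_le hd0, Real.sin_nonneg_of_nonneg_of_le_pi hd0 (by linarith [hα2 i, hβ0 i]),
      Real.sin_le_one ((α i + β i) / 2), Real.sin_nonneg_of_nonneg_of_le_pi hs0 hsπ]
  -- cos + sin ≥ 1 on [0, π/2]
  have h3 : ∀ i : ℤ, (1/2 : ℝ) ≤ Real.cos (α i) + Real.sin (α i) / 2 := by
    intro i
    nlinarith [Real.sin_sq_add_cos_sq (α i), hsinα i, hcosα i]
  -- put it together
  set Sα := ∑ i ∈ Finset.range n, α i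
  set Sβ := ∑ i ∈ Finset.range n, β i
  set SA := ∑ i ∈ Finset.range n, Real.sin (α i)
  set SB := ∑ i ∈ Finset.range n, Real.sin (β i)
  set CA := ∑ i ∈ Finset.range n, Real.cos (α i)
  set CB := ∑ i ∈ Finset.range n, Real.cos (β i)
  have hsum1 : SA - SB ≤ Sα - Sβ := by
    have : ∑ i ∈ Finset.range n, (Real.sin (α i) - Real.sin (β i)) ≤
        ∑ i ∈ Finset.range n, ((α i : ℝ) - β i) :=
      Finset.sum_le_sum (fun i _ => h1 i)
    simpa [Finset.sum_sub_distrib, Sα, Sβ, SA, SB] using this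
  have hsum2 : CB - CA ≤ Sα - Sβ := by
    have : ∑ i ∈ Finset.range n, (Real.cos (β i) - Real.cos (α i)) ≤
        ∑ i ∈ Finset.range n, ((α i : ℝ) - β i) :=
      Finset.sum_le_sum (fun i _ => h2 i)
    simpa [Finset.sum_sub_distrib, Sα, Sβ, SA, SB, CA, CB] using this
  have hsum3 : (n : ℝ) / 2 ≤ CA + SA / 2 := by
    have : ∑ i ∈ Finset.range n, (1/2 : ℝ) ≤
        ∑ i ∈ Finset.range n, (Real.cos (α i) + Real.sin (α i) / 2) :=
      Finset.sum_le_sum (fun i _ => h3 i)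
    simp only [Finset.sum_const, Finset.card_range, nsmul_eq_mul, Finset.sum_add_distrib] at this
    rw [← Finset.sum_div] at this
    simp only [CA, SA]
    linarith
  -- 2(Sα - Sβ) ≥ (SA - SB) + (CB - CA) = SB + CA = SA/2 + CA ≥ n/2
  have hSB : SB = SA / 2 := by linarith
  linarith
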